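/- Let n ≡ 1 (mod 3) in 𝒪_F, written as n = a + bω + c√3 + dω√3. Given the supplementary laws (ω/n)₃ = ω^{(a+b−1)/3}, (1−ω/n)₃ = ω^{(1−a)/3}, and (ε/n)₃ = ω^{−c} where ε = (1+√3)/(1−i), one has (√3/n)₃ = ω^{b/3}. -/

import Mathlib

open NumberField Polynomial

local notation "F12" => CyclotomicField 12 ℚ

/-- A rational integer divisibility can be read off in the ring of integers. -/
lemma stmt12_aux_int_dvd (s k : ℤ) (hs : s ≠ 0) (u : 𝓞 F12)
    (h : (k : 𝓞 F12) = (s : 𝓞 F12) * u) : s ∣ k := by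
  have hF : algebraMap ℚ F12 ((k : ℚ) / (s : ℚ)) = algebraMap (𝓞 F12) F12 u := by
    have h' : ((k : F12)) = (s : F12) * (algebraMap (𝓞 F12) F12 u) := by
      have := congrArg (algebraMap (𝓞 F12) F12) h
      push_cast at this ⊢
      simpa using this
    have hs' : (s : F12) ≠ 0 := by exact_mod_cast hs
    rw [map_div₀, map_intCast, map_intCast, h', mul_div_cancel_left₀ _ hs']
  have hint : IsIntegral ℤ ((k : ℚ) / (s : ℚ)) := by
    rw [← isIntegral_algebraMap_iff (algebraMap ℚ F12).injective, hF]
    exact RingOfIntegers.isIntegral_coe u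
  obtain ⟨y, hy⟩ := IsIntegrallyClosed.isIntegral_iff.mp hint
  refine ⟨y, ?_⟩
  have hs' : (s : ℚ) ≠ 0 := by exact_mod_cast hs
  have h2 : (y : ℚ) * s = k := (eq_div_iff hs').mp hy
  have h3 : (k : ℚ) = (s : ℚ) * (y : ℚ) := by rw [← h2]; ring
  exact_mod_cast h3

/-- Galois action: there is a ring endomorphism of `𝓞 F12` sending `ζ` to `ζ ^ j`. -/
lemma stmt12_aux_gal (ζ : 𝓞 F12) (hζ : IsPrimitiveRoot ζ 12) (j : ℕ) (hj : Nat.Coprime j 12) :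
    ∃ g : 𝓞 F12 →+* 𝓞 F12, g ζ = ζ ^ j := by
  have hz : IsPrimitiveRoot (algebraMap (𝓞 F12) F12 ζ) 12 :=
    hζ.map_of_injective RingOfIntegers.coe_injective
  set z : F12 := algebraMap (𝓞 F12) F12 ζ with hzdef
  have hzj : IsPrimitiveRoot (z ^ j) 12 := hz.pow_of_coprime j hj
  have hz12 : IsPrimitiveRoot z ((12 : ℕ) : ℕ) := by exact_mod_cast hz
  haveI : IsCyclotomicExtension {12} ℚ F12 := CyclotomicField.isCyclotomicExtension 12 ℚ
  set pb := hz12.powerBasis ℚ with hpb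
  have hgen : pb.gen = z := by simp [hpb, IsPrimitiveRoot.powerBasis_gen]
  have hroot : (aeval (z ^ j)) (minpoly ℚ pb.gen) = 0 := by
    rw [hgen, ← cyclotomic_eq_minpoly_rat hz (by norm_num),
      cyclotomic_eq_minpoly_rat hzj (by norm_num)]
    exact minpoly.aeval ℚ _
  set φ := pb.lift (z ^ j) hroot with hφ
  refine ⟨RingOfIntegers.mapRingHom (φ : F12 →ₐ[ℚ] F12), ?_⟩
  apply RingOfIntegers.coe_injective
  have h1 : algebraMap (𝓞 F12) F12 (RingOfIntegers.mapRingHom (φ : F12 →ₐ[ℚ] F12) ζ) = φ z := rfl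
  rw [h1, ← hgen, pb.lift_gen]
  push_cast
  rfl

lemma stmt12_aux_int (A B : ℤ) (h1 : (3:ℤ) ∣ 4*A - 2*B) (h2 : (9:ℤ) ∣ 4*A^2 - 4*A*B + 4*B^2) :
    (3:ℤ) ∣ A ∧ (3:ℤ) ∣ B := by
  have h1' : (3:ℤ) ∣ A + B := by omega
  obtain ⟨k, hk⟩ := h1'
  have hB : B = 3*k - A := by omega
  subst hB
  obtain ⟨m, hm⟩ := h2
  have hm2 : 12*(A^2) - 36*(A*k) + 36*(k^2) = 9*m := by linear_combination hm
  have hx : (3:ℤ) ∣ A^2 := by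
    set x := A^2 with hxd
    set y := A*k with hyd
    set z := k^2 with hzd
    omega
  have hA : (3:ℤ) ∣ A := Int.prime_three.dvd_of_dvd_pow hx
  exact ⟨hA, by omega⟩

set_option maxHeartbeats 1000000 in
theorem stmt12 (ζ : 𝓞 (CyclotomicField 12 ℚ)) (hζ : IsPrimitiveRoot ζ 12)
    (a b c d : ℤ) (n : 𝓞 (CyclotomicField 12 ℚ))
    (hn : n = (a : 𝓞 (CyclotomicField 12 ℚ)) + (b : 𝓞 (CyclotomicField 12 ℚ)) * ζ ^ 4
      + (c : 𝓞 (CyclotomicField 12 ℚ)) * (ζ + ζ ^ 11)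
      + (d : 𝓞 (CyclotomicField 12 ℚ)) * (ζ ^ 4 * (ζ + ζ ^ 11)))
    (h3 : (3 : 𝓞 (CyclotomicField 12 ℚ)) ∣ n - 1)
    (ε : 𝓞 (CyclotomicField 12 ℚ)) (hε : ε * (1 - ζ ^ 3) = 1 + (ζ + ζ ^ 11))
    (w : ℂ) (hw3 : w ^ 3 = 1) (hw1 : w ≠ 1)
    (χ : 𝓞 (CyclotomicField 12 ℚ) → ℂ)
    (hmul : ∀ x y, χ (x * y) = χ x * χ y)
    (hω : χ (ζ ^ 4) = w ^ ((a + b - 1) / 3))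
    (h1ω : χ (1 - ζ ^ 4) = w ^ ((1 - a) / 3))
    (hεval : χ ε = w ^ (-c))
    (hi : χ (ζ ^ 3) = 1) :
    χ (ζ + ζ ^ 11) = w ^ (b / 3) := by
  have h12 : ζ ^ 12 = 1 := hζ.pow_eq_one
  have h6 : ζ ^ 6 = -1 := by
    have hsq : ζ ^ 6 * ζ ^ 6 = 1 := by rw [← pow_add]; exact h12
    rcases mul_self_eq_one_iff.mp hsq with h | h
    · exact absurd h (hζ.pow_ne_one_of_pos_of_lt (by norm_num) (by norm_num))
    · exact h
  have homega : (ζ ^ 4) ^ 2 + ζ ^ 4 + 1 = 0 := by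
    have hne : ζ ^ 4 - 1 ≠ 0 :=
      sub_ne_zero.mpr (hζ.pow_ne_one_of_pos_of_lt (by norm_num) (by norm_num))
    have hmul0 : (ζ ^ 4 - 1) * ((ζ ^ 4) ^ 2 + ζ ^ 4 + 1) = 0 := by linear_combination h12
    rcases mul_eq_zero.mp hmul0 with h | h
    · exact absurd h hne
    · exact h
  obtain ⟨g7, hg7⟩ := stmt12_aux_gal ζ hζ 7 (by norm_num)
  obtain ⟨g5, hg5⟩ := stmt12_aux_gal ζ hζ 5 (by norm_num)
  have hg7' : g7 ζ = -ζ := by rw [hg7]; linear_combination ζ * h6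
  obtain ⟨v, hv⟩ := h3
  set u : 𝓞 (CyclotomicField 12 ℚ) := v + g7 v with hu
  -- first key identity
  have e2 : (n - 1) + g7 (n - 1) =
      2*((a : 𝓞 (CyclotomicField 12 ℚ)) - 1) + 2*(b : 𝓞 (CyclotomicField 12 ℚ)) * ζ^4 := by
    rw [map_sub, map_one, hn]
    simp only [map_add, map_mul, map_pow, map_intCast, hg7']
    ring
  have h7v : g7 (n - 1) = 3 * g7 v := by
    rw [hv, map_mul, map_ofNat]
  have e3 : 2*((a : 𝓞 (CyclotomicField 12 ℚ)) - 1) + 2*(b : 𝓞 (CyclotomicField 12 ℚ)) * ζ^4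
      = 3 * u := by
    rw [hu, mul_add, ← h7v, ← hv, ← e2]
  have e5 : 2*((a : 𝓞 (CyclotomicField 12 ℚ)) - 1)
      + 2*(b : 𝓞 (CyclotomicField 12 ℚ)) * (ζ^4)^2 = 3 * g5 u := by
    have := congrArg g5 e3
    simp only [map_add, map_mul, map_sub, map_one, map_pow, map_intCast, map_ofNat, hg5] at this
    rw [← this]
    linear_combination (-2*(b : 𝓞 (CyclotomicField 12 ℚ))*ζ^8) * h12
  -- divisibility of 4(a-1) - 2b
  have hsum : ((4*(a-1) - 2*b : ℤ) : 𝓞 (CyclotomicField 12 ℚ))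
      = ((3:ℤ) : 𝓞 (CyclotomicField 12 ℚ)) * (u + g5 u) := by
    push_cast
    linear_combination e3 + e5 - 2*(b : 𝓞 (CyclotomicField 12 ℚ))*homega
  have hprod : ((4*(a-1)^2 - 4*(a-1)*b + 4*b^2 : ℤ) : 𝓞 (CyclotomicField 12 ℚ))
      = ((9:ℤ) : 𝓞 (CyclotomicField 12 ℚ)) * (u * g5 u) := by
    push_cast
    linear_combination (2*((a : 𝓞 (CyclotomicField 12 ℚ))-1)
        + 2*(b : 𝓞 (CyclotomicField 12 ℚ))*(ζ^4)^2) * e3 + (3*u) * e5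
      - (4*((a : 𝓞 (CyclotomicField 12 ℚ))-1)*(b : 𝓞 (CyclotomicField 12 ℚ))) * homega
      - (4*(b : 𝓞 (CyclotomicField 12 ℚ))^2) * h12
  have hd1 : (3:ℤ) ∣ 4*(a-1) - 2*b := stmt12_aux_int_dvd 3 _ (by norm_num) _ hsum
  have hd2 : (9:ℤ) ∣ 4*(a-1)^2 - 4*(a-1)*b + 4*b^2 := stmt12_aux_int_dvd 9 _ (by norm_num) _ hprod
  obtain ⟨hA, hBd⟩ := stmt12_aux_int (a-1) b hd1 hd2
  obtain ⟨s, hs⟩ := hA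
  obtain ⟨t, ht⟩ := hBd
  -- factor √3
  have hfact : ζ + ζ ^ 11 = ζ^3 * (ζ^3 * (ζ^3 * (ζ^4 * (1 - ζ^4)))) := by
    linear_combination (-ζ) * h12 + ζ^11 * h6
  have hw0 : w ≠ 0 := by
    intro h
    rw [h] at hw3
    norm_num at hw3
  rw [hfact, hmul, hmul, hmul, hmul, hi, hω, h1ω, one_mul, one_mul, one_mul]
  have q1 : (a + b - 1) / 3 = s + t := by omega
  have q2 : (1 - a) / 3 = -s := by omega
  have q3 : b / 3 = t := by omega
  rw [q1, q2, q3, ← zpow_add₀ hw0, show s + t + -s = t from by ring]
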